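/- Let φ: A → B be an injective homomorphism of finitely generated groups and let β: B → G be a homomorphism to a finite group G. Regard ℤ[G] as a B-module via left multiplication through β, and as an A-module via left multiplication through β ∘ φ. Then the induced maps φ_*: H_j(A; ℤ[G]) → H_j(B; ℤ[G]) are bijections for j = 0 and j = 1 if and only if the following two conditions hold: (1) the image of β ∘ φ: A → G equals the image of β: B → G, and (2) φ induces an isomorphism of groups A/[ker(β∘φ), ker(β∘φ)] → B/[ker(β), ker(β)]. -/

import Mathlib

noncomputable section

namespace FV

variable {A B : Type} [Group A] [Group B] {M : Type} [AddCommGroup M]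

/-- The group structure on `AddAut M` used by the older Mathlib (composition), which no longer
provides it as an instance (it is now an additive group). -/
instance addAutGroup (M : Type) [AddCommGroup M] : Group (AddAut M) where
  mul g h := AddEquiv.trans h g
  one := AddEquiv.refl _
  inv := AddEquiv.symm
  mul_assoc _ _ _ := rfl
  one_mul _ := rfl
  mul_one _ := rfl
  inv_mul_cancel := AddEquiv.self_trans_symm

/-- An action of the group `A` on the abelian group `M` by additive automorphisms,
i.e. a `ℤ[A]`-module structure on `M`. -/
abbrev Rep (A M : Type) [Group A] [AddCommGroup M] := A →* AddAut M

/-- The boundary map `C₁ → C₀` of the inhomogeneous chain complex computing the group homology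
of `A` with coefficients in `M`; on a generator `a ⊗ m` it is `a⁻¹ • m - m`. -/
def d1 (ρ : Rep A M) : (A →₀ M) →+ M :=
  Finsupp.liftAddHom fun a => (ρ a⁻¹).toAddMonoidHom - AddMonoidHom.id M

/-- The boundary map `C₂ → C₁`; on a generator `(a₁, a₂) ⊗ m` it is
`a₂ ⊗ a₁⁻¹ • m - (a₁a₂) ⊗ m + a₁ ⊗ m`. -/
def d2 (ρ : Rep A M) : (A × A →₀ M) →+ (A →₀ M) :=
  Finsupp.liftAddHom fun p => (Finsupp.singleAddHom p.2).comp (ρ p.1⁻¹).toAddMonoidHom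
    - Finsupp.singleAddHom (p.1 * p.2) + Finsupp.singleAddHom p.1

/-- Zeroth group homology `H₀(A; M)`, the coinvariants of the action. -/
abbrev H0 (ρ : Rep A M) := M ⧸ (d1 ρ).range

/-- One-cycles. -/
abbrev Z1 (ρ : Rep A M) : AddSubgroup (A →₀ M) := (d1 ρ).ker

/-- First group homology `H₁(A; M)`: one-cycles modulo one-boundaries. -/
abbrev H1 (ρ : Rep A M) := Z1 ρ ⧸ ((d2 ρ).range.addSubgroupOf (Z1 ρ))

lemma d1_comp (φ : A →* B) (ρ : Rep B M) :
    d1 (ρ.comp φ) = (d1 ρ).comp (Finsupp.mapDomain.addMonoidHom φ) := by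
  refine Finsupp.addHom_ext fun a m => ?_
  simp [d1, Finsupp.mapDomain.addMonoidHom_apply, Finsupp.mapDomain_single]

lemma d2_comp (φ : A →* B) (ρ : Rep B M) :
    (Finsupp.mapDomain.addMonoidHom φ).comp (d2 (ρ.comp φ))
      = (d2 ρ).comp (Finsupp.mapDomain.addMonoidHom (Prod.map φ φ)) := by
  refine Finsupp.addHom_ext fun p m => ?_
  simp only [AddMonoidHom.comp_apply, d2, Finsupp.liftAddHom_apply_single,
    AddMonoidHom.sub_apply, AddMonoidHom.add_apply, Finsupp.singleAddHom_apply, map_add, map_sub]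
  simp [Finsupp.mapDomain.addMonoidHom_apply, Finsupp.mapDomain_single]

/-- The map `H₀(A; M) → H₀(B; M)` induced by a homomorphism `φ : A → B`, where `A` acts on the
`B`-module `M` through `φ`. -/
def H0Map (φ : A →* B) (ρ : Rep B M) : H0 (ρ.comp φ) →+ H0 ρ :=
  QuotientAddGroup.map _ _ (AddMonoidHom.id M) (by
    rw [d1_comp φ ρ]
    rintro x ⟨y, rfl⟩
    exact ⟨Finsupp.mapDomain.addMonoidHom φ y, rfl⟩)

/-- The map on one-cycles induced by `φ`. -/
def Z1Map (φ : A →* B) (ρ : Rep B M) : Z1 (ρ.comp φ) →+ Z1 ρ :=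
  ((Finsupp.mapDomain.addMonoidHom φ).domRestrict (Z1 (ρ.comp φ))).codRestrict (Z1 ρ)
    (by
      rintro ⟨x, hx⟩
      have hx' : d1 (ρ.comp φ) x = 0 := hx
      rw [d1_comp φ ρ] at hx'
      exact hx')

/-- The map `H₁(A; M) → H₁(B; M)` induced by a homomorphism `φ : A → B`, where `A` acts on the
`B`-module `M` through `φ`. -/
def H1Map (φ : A →* B) (ρ : Rep B M) : H1 (ρ.comp φ) →+ H1 ρ :=
  QuotientAddGroup.map _ _ (Z1Map φ ρ) (by
    rintro ⟨x, hx⟩ hmem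
    obtain ⟨y, hy⟩ := hmem
    refine ⟨Finsupp.mapDomain.addMonoidHom (Prod.map φ φ) y, ?_⟩
    have h2 := DFunLike.congr_fun (d2_comp φ ρ) y
    simp only [AddMonoidHom.comp_apply] at h2
    rw [hy] at h2
    exact h2.symm)

/-- The permutation representation: `G` acting on the free abelian group `ℤ[X]` on a `G`-set
`X` by permuting basis elements. -/
def permRep (G X : Type) [Group G] [MulAction G X] : Rep G (X →₀ ℤ) where
  toFun g := Finsupp.domCongr (MulAction.toPerm g)
  map_one' := by
    ext f x
    simp
    rfl
  map_mul' g h := by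
    ext f x
    simp [mul_smul]
    rfl

end FV

namespace FV

variable {A B : Type} [Group A] [Group B]

/-- The map of left coset spaces `A/J → B/K` induced by a homomorphism `φ : A → B`
with `φ(J) ⊆ K`. -/
def cosetMap (φ : A →* B) (J : Subgroup A) (K : Subgroup B) (h : J ≤ K.comap φ) :
    A ⧸ J → B ⧸ K :=
  Quotient.map' φ fun a a' hr => by
    rw [QuotientGroup.leftRel_apply] at hr ⊢
    simpa using h hr

lemma commutator_comap_le (φ : A →* B) (K : Subgroup B) :
    ⁅K.comap φ, K.comap φ⁆ ≤ (⁅K, K⁆).comap φ := by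
  rw [← Subgroup.map_le_iff_le_comap, Subgroup.map_commutator]
  exact Subgroup.commutator_mono (Subgroup.map_comap_le φ K) (Subgroup.map_comap_le φ K)

end FV

namespace FV

lemma ker_comp_commutator_le {A B G : Type} [Group A] [Group B] [Group G]
    (φ : A →* B) (β : B →* G) :
    ⁅(β.comp φ).ker, (β.comp φ).ker⁆ ≤ (⁅β.ker, β.ker⁆).comap φ := by
  have h : (β.comp φ).ker = β.ker.comap φ := by
    ext x
    simp [MonoidHom.mem_ker]
  rw [h]
  exact commutator_comap_le φ β.ker

end FV

open FV

namespace FVP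
open FV

variable {A B G : Type} [Group A] [Group B] [Group G]

abbrev Mz (G : Type) := G →₀ ℤ

/-- The module `ℤ[G]` with `A` acting through `α`. -/
abbrev rho (α : A →* G) : Rep A (Mz G) := (permRep G G).comp α

lemma rho_single (α : A →* G) (a : A) (g : G) (z : ℤ) :
    (rho α a) (Finsupp.single g z) = Finsupp.single (α a * g) z := by
  simp [permRep, Finsupp.domCongr_apply]

lemma rho_inv_single (α : A →* G) (a : A) (g : G) (z : ℤ) :
    (rho α a⁻¹) (Finsupp.single g z) = Finsupp.single ((α a)⁻¹ * g) z := by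
  rw [rho_single]; rw [map_inv]

lemma d1_single (α : A →* G) (a : A) (g : G) (z : ℤ) :
    d1 (rho α) (Finsupp.single a (Finsupp.single g z))
      = Finsupp.single ((α a)⁻¹ * g) z - Finsupp.single g z := by
  have h := rho_inv_single α a g z
  simp only [d1, Finsupp.liftAddHom_apply_single, AddMonoidHom.sub_apply,
    AddMonoidHom.id_apply, AddEquiv.coe_toAddMonoidHom] at *
  rw [h]

lemma d2_single (α : A →* G) (a₁ a₂ : A) (g : G) (z : ℤ) :
    d2 (rho α) (Finsupp.single (a₁, a₂) (Finsupp.single g z))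
      = Finsupp.single a₂ (Finsupp.single ((α a₁)⁻¹ * g) z)
        - Finsupp.single (a₁ * a₂) (Finsupp.single g z)
        + Finsupp.single a₁ (Finsupp.single g z) := by
  have h := rho_inv_single α a₁ g z
  simp only [d2, Finsupp.liftAddHom_apply_single, AddMonoidHom.sub_apply,
    AddMonoidHom.add_apply, AddMonoidHom.comp_apply, Finsupp.singleAddHom_apply,
    AddEquiv.coe_toAddMonoidHom] at *
  rw [h]

/-- The orbit equivalence relation on `G` for the action of `A` through `α`. -/
def orb (α : A →* G) : Setoid G where
  r g g' := ∃ a : A, α a * g = g'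
  iseqv := by
    refine ⟨fun g => ⟨1, by simp⟩, ?_, ?_⟩
    · rintro g g' ⟨a, rfl⟩; exact ⟨a⁻¹, by simp [mul_assoc]⟩
    · rintro g g' g'' ⟨a, rfl⟩ ⟨a', rfl⟩; exact ⟨a' * a, by simp [mul_assoc]⟩

/-- The orbit space. -/
abbrev OS (α : A →* G) := Quotient (orb α)

/-- Canonical representative of the orbit of `g`. -/
def repg (α : A →* G) (g : G) : G := (Quotient.mk (orb α) g).out

lemma repg_out (α : A →* G) (c : OS α) : repg α c.out = c.out := by
  unfold repg
  rw [Quotient.out_eq]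

lemma repg_eq_of_rel (α : A →* G) (a : A) (g : G) : repg α ((α a)⁻¹ * g) = repg α g := by
  unfold repg
  congr 1
  refine Quotient.sound ⟨a, by simp [mul_assoc]⟩

open scoped Classical in
/-- A choice of `t g ∈ A` with `α (t g) * g = repg α g`, and `t g = 1` for representatives. -/
def tf (α : A →* G) (g : G) : A :=
  if h : g = repg α g then 1 else
    Classical.choose ((orb α).symm (Quotient.mk_out (s := orb α) g))

lemma tf_spec (α : A →* G) (g : G) : α (tf α g) * g = repg α g := by
  unfold tf
  split
  · simpa using (by assumption : g = repg α g)
  · exact Classical.choose_spec ((orb α).symm (Quotient.mk_out (s := orb α) g))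

lemma tf_out (α : A →* G) (c : OS α) : tf α c.out = 1 := by
  unfold tf
  rw [dif_pos (repg_out α c).symm]

/-- The `K`-valued cocycle-like function. -/
def kp (α : A →* G) (a : A) (g : G) : A := tf α g * a * (tf α ((α a)⁻¹ * g))⁻¹

lemma kp_ker (α : A →* G) (a : A) (g : G) : kp α a g ∈ α.ker := by
  have h1 := tf_spec α g
  have h2 := tf_spec α ((α a)⁻¹ * g)
  rw [repg_eq_of_rel α a g] at h2
  have key : α (kp α a g) * repg α g = repg α g := by
    have h2' : (α (tf α ((α a)⁻¹ * g)))⁻¹ * repg α g = (α a)⁻¹ * g := by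
      rw [← h2]; group
    calc α (kp α a g) * repg α g
        = α (tf α g) * (α a * ((α (tf α ((α a)⁻¹ * g)))⁻¹ * repg α g)) := by
          simp [kp, map_mul, map_inv, mul_assoc]
      _ = α (tf α g) * g := by rw [h2']; group
      _ = repg α g := h1
  rw [MonoidHom.mem_ker]
  exact mul_right_cancel (show α (kp α a g) * repg α g = 1 * repg α g by rw [key, one_mul])

lemma kp_mul (α : A →* G) (a₁ a₂ : A) (g : G) :
    kp α a₁ g * kp α a₂ ((α a₁)⁻¹ * g) = kp α (a₁ * a₂) g := by
  unfold kp
  rw [show (α (a₁ * a₂))⁻¹ * g = (α a₂)⁻¹ * ((α a₁)⁻¹ * g) by rw [map_mul]; group]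
  group

lemma kp_of_ker (α : A →* G) (k : A) (hk : k ∈ α.ker) (c : OS α) :
    kp α k c.out = k := by
  unfold kp
  rw [MonoidHom.mem_ker.mp hk]
  simp [tf_out]

end FVP

namespace FVP
variable {A B G : Type} [Group A] [Group B] [Group G]

/-- Extensionality for additive maps out of `C₁ = A →₀ ℤ[G]`. -/
lemma C1_ext {N : Type} [AddCommMonoid N] (f f' : (A →₀ Mz G) →+ N)
    (h : ∀ a g z, f (Finsupp.single a (Finsupp.single g z))
      = f' (Finsupp.single a (Finsupp.single g z))) : f = f' := by
  refine Finsupp.addHom_ext fun a m => ?_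
  induction m using Finsupp.induction_linear with
  | zero => simp
  | add p q hp hq => rw [Finsupp.single_add, map_add, map_add, hp, hq]
  | single g z => exact h a g z

/-- Extensionality for additive maps out of `C₂`. -/
lemma C2_ext {N : Type} [AddCommMonoid N] (f f' : (A × A →₀ Mz G) →+ N)
    (h : ∀ a₁ a₂ g z, f (Finsupp.single (a₁, a₂) (Finsupp.single g z))
      = f' (Finsupp.single (a₁, a₂) (Finsupp.single g z))) : f = f' := by
  refine Finsupp.addHom_ext fun p m => ?_
  induction m using Finsupp.induction_linear with
  | zero => simp
  | add p q hp hq => rw [Finsupp.single_add, map_add, map_add, hp, hq]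
  | single g z => exact h p.1 p.2 g z

lemma d1_d2 (α : A →* G) : (d1 (rho α)).comp (d2 (rho α)) = 0 := by
  refine C2_ext _ _ fun a₁ a₂ g z => ?_
  simp only [AddMonoidHom.comp_apply, AddMonoidHom.zero_apply, d2_single, map_add, map_sub,
    d1_single]
  rw [show (α (a₁ * a₂))⁻¹ * g = (α a₂)⁻¹ * ((α a₁)⁻¹ * g) by rw [map_mul]; group]
  abel

/-- The chain-level projection onto "κ-normal form". -/
def theta (α : A →* G) : (A →₀ Mz G) →+ (A →₀ Mz G) :=
  Finsupp.liftAddHom fun a => Finsupp.liftAddHom fun g =>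
    (Finsupp.singleAddHom (kp α a g)).comp (Finsupp.singleAddHom (repg α g))

lemma theta_single (α : A →* G) (a : A) (g : G) (z : ℤ) :
    theta α (Finsupp.single a (Finsupp.single g z))
      = Finsupp.single (kp α a g) (Finsupp.single (repg α g) z) := by
  simp only [theta, Finsupp.liftAddHom_apply_single, AddMonoidHom.comp_apply,
    Finsupp.singleAddHom_apply]

/-- The "basepoint" contraction `C₀ → C₁`. -/
def tauh (α : A →* G) : Mz G →+ (A →₀ Mz G) :=
  Finsupp.liftAddHom fun g =>
    (Finsupp.singleAddHom (tf α g)).comp (Finsupp.singleAddHom (repg α g))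

lemma tauh_single (α : A →* G) (g : G) (z : ℤ) :
    tauh α (Finsupp.single g z)
      = Finsupp.single (tf α g) (Finsupp.single (repg α g) z) := by
  simp [tauh, Finsupp.liftAddHom_apply_single]

/-- The chain homotopy `C₁ → C₂`. -/
def hh (α : A →* G) : (A →₀ Mz G) →+ (A × A →₀ Mz G) :=
  Finsupp.liftAddHom fun a => Finsupp.liftAddHom fun g =>
    ((Finsupp.singleAddHom (tf α g, a)).comp (Finsupp.singleAddHom (repg α g)))
      - ((Finsupp.singleAddHom (kp α a g, tf α ((α a)⁻¹ * g))).comp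
          (Finsupp.singleAddHom (repg α g)))

lemma hh_single (α : A →* G) (a : A) (g : G) (z : ℤ) :
    hh α (Finsupp.single a (Finsupp.single g z))
      = Finsupp.single (tf α g, a) (Finsupp.single (repg α g) z)
        - Finsupp.single (kp α a g, tf α ((α a)⁻¹ * g)) (Finsupp.single (repg α g) z) := by
  simp only [hh, Finsupp.liftAddHom_apply_single, AddMonoidHom.sub_apply,
    AddMonoidHom.comp_apply, Finsupp.singleAddHom_apply]

/-- The master identity: `id = θ + τ ∘ d₁ + d₂ ∘ H`. -/
lemma master (α : A →* G) :
    AddMonoidHom.id (A →₀ Mz G)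
      = theta α + (tauh α).comp (d1 (rho α)) + (d2 (rho α)).comp (hh α) := by
  refine C1_ext _ _ fun a g z => ?_
  have htf : (α (tf α g))⁻¹ * repg α g = g := by rw [← tf_spec α g]; group
  have hkp : (α (kp α a g))⁻¹ * repg α g = repg α g := by
    rw [MonoidHom.mem_ker.mp (kp_ker α a g)]; group
  have hmul : kp α a g * tf α ((α a)⁻¹ * g) = tf α g * a := by unfold kp; group
  simp only [AddMonoidHom.add_apply, AddMonoidHom.comp_apply, AddMonoidHom.id_apply,
    theta_single, d1_single, map_sub, map_add, tauh_single, hh_single, d2_single,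
    hmul, htf, hkp, repg_eq_of_rel α a g]
  abel

lemma d1_theta (α : A →* G) : (d1 (rho α)).comp (theta α) = 0 := by
  refine C1_ext _ _ fun a g z => ?_
  simp only [AddMonoidHom.comp_apply, theta_single, d1_single, AddMonoidHom.zero_apply,
    MonoidHom.mem_ker.mp (kp_ker α a g)]
  simp

end FVP

namespace FVP
open FV
variable {A B G : Type} [Group A] [Group B] [Group G]

/-- `ℤ[S] → H₀`, basis element to the class of its representative. -/
def Th0 (α : A →* G) : (OS α →₀ ℤ) →+ H0 (rho α) :=
  Finsupp.liftAddHom fun c =>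
    (QuotientAddGroup.mk' (d1 (rho α)).range).comp (Finsupp.singleAddHom c.out)

lemma Th0_single (α : A →* G) (c : OS α) (z : ℤ) :
    Th0 α (Finsupp.single c z)
      = QuotientAddGroup.mk' (d1 (rho α)).range (Finsupp.single c.out z) := by
  simp [Th0, Finsupp.liftAddHom_apply_single]

def nu (α : A →* G) : Mz G →+ (OS α →₀ ℤ) :=
  Finsupp.mapDomain.addMonoidHom (Quotient.mk (orb α))

lemma nu_d1 (α : A →* G) : (nu α).comp (d1 (rho α)) = 0 := by
  refine C1_ext _ _ fun a g z => ?_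
  simp only [AddMonoidHom.comp_apply, d1_single, map_sub, AddMonoidHom.zero_apply, nu,
    Finsupp.mapDomain.addMonoidHom_apply, Finsupp.mapDomain_single]
  rw [show Quotient.mk (orb α) ((α a)⁻¹ * g) = Quotient.mk (orb α) g from
    Quotient.sound ⟨a, by group⟩]
  simp

def nu1 (α : A →* G) : H0 (rho α) →+ (OS α →₀ ℤ) :=
  QuotientAddGroup.lift _ (nu α) (by
    rintro x ⟨y, rfl⟩
    exact DFunLike.congr_fun (nu_d1 α) y)

lemma mk_single_repg (α : A →* G) (g : G) (z : ℤ) :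
    QuotientAddGroup.mk' (d1 (rho α)).range (Finsupp.single (repg α g) z)
      = QuotientAddGroup.mk' (d1 (rho α)).range (Finsupp.single g z) := by
  rw [QuotientAddGroup.mk'_eq_mk']
  refine ⟨Finsupp.single g z - Finsupp.single (repg α g) z, ⟨?_, by abel⟩⟩
  refine ⟨Finsupp.single (tf α g) (Finsupp.single (repg α g) z), ?_⟩
  rw [d1_single]
  rw [show (α (tf α g))⁻¹ * repg α g = g by rw [← tf_spec α g]; group]

lemma nu1_Th0 (α : A →* G) (v : OS α →₀ ℤ) : nu1 α (Th0 α v) = v := by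
  induction v using Finsupp.induction_linear with
  | zero => simp
  | add p q hp hq => rw [map_add, map_add, hp, hq]
  | single c z =>
      rw [Th0_single]
      show nu α _ = _
      simp only [nu, Finsupp.mapDomain.addMonoidHom_apply, Finsupp.mapDomain_single,
        Quotient.out_eq]

lemma Th0_nu (α : A →* G) (m : Mz G) :
    Th0 α (nu α m) = QuotientAddGroup.mk' (d1 (rho α)).range m := by
  have : (Th0 α).comp (nu α) = QuotientAddGroup.mk' (d1 (rho α)).range := by
    refine Finsupp.addHom_ext fun g z => ?_
    simp only [AddMonoidHom.comp_apply, nu, Finsupp.mapDomain.addMonoidHom_apply,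
      Finsupp.mapDomain_single, Th0_single]
    exact mk_single_repg α g z
  exact DFunLike.congr_fun this m

lemma Th0_bijective (α : A →* G) : Function.Bijective (Th0 α) := by
  constructor
  · intro x y h
    rw [← nu1_Th0 α x, ← nu1_Th0 α y, h]
  · intro q
    obtain ⟨m, rfl⟩ := QuotientAddGroup.mk'_surjective (d1 (rho α)).range q
    exact ⟨nu α m, Th0_nu α m⟩

end FVP

namespace FVP
open FV

lemma bij_conj {X Y Z W : Type} {e1 : X → Y} {e2 : Z → W} {f : Y → W} {g : X → Z}
    (he1 : Function.Bijective e1) (he2 : Function.Bijective e2)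
    (h : ∀ x, f (e1 x) = e2 (g x)) : Function.Bijective f ↔ Function.Bijective g := by
  let E1 := Equiv.ofBijective e1 he1
  let E2 := Equiv.ofBijective e2 he2
  constructor
  · intro hf
    have hg : g = fun x => E2.symm (f (e1 x)) := by
      funext x
      rw [h x]
      exact (E2.symm_apply_apply (g x)).symm
    rw [hg]
    exact (E2.symm.bijective.comp hf).comp he1
  · intro hg
    have hf : f = fun y => e2 (g (E1.symm y)) := by
      funext y
      rw [← h (E1.symm y)]
      congr 1
      exact (E1.apply_symm_apply y).symm
    rw [hf]
    exact (he2.comp hg).comp E1.symm.bijective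

lemma mapDomain_bijective {X Y : Type} (f : X → Y) (hf : Function.Bijective f) :
    Function.Bijective (Finsupp.mapDomain.addMonoidHom (M := ℤ) f) := by
  have : ⇑(Finsupp.mapDomain.addMonoidHom (M := ℤ) f)
      = ⇑(Finsupp.domCongr (M := ℤ) (Equiv.ofBijective f hf)) := by
    funext x
    rw [Finsupp.mapDomain.addMonoidHom_apply, Finsupp.domCongr_apply,
      Finsupp.equivMapDomain_eq_mapDomain]
    rfl
  rw [this]
  exact (Finsupp.domCongr (M := ℤ) (Equiv.ofBijective f hf)).bijective

lemma injective_of_mapDomain {X Y : Type} (f : X → Y)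
    (hf : Function.Bijective (Finsupp.mapDomain.addMonoidHom (M := ℤ) f)) :
    Function.Injective f := by
  intro c c' h
  have h2 : Finsupp.mapDomain.addMonoidHom (M := ℤ) f (Finsupp.single c 1)
      = Finsupp.mapDomain.addMonoidHom (M := ℤ) f (Finsupp.single c' 1) := by
    simp only [Finsupp.mapDomain.addMonoidHom_apply, Finsupp.mapDomain_single, h]
  exact Finsupp.single_left_injective (one_ne_zero) (hf.1 h2)

variable {A B G : Type} [Group A] [Group B] [Group G]

/-- The induced map of orbit spaces. -/
def pi (φ : A →* B) (β : B →* G) : OS (β.comp φ) → OS β :=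
  Quotient.map' id (by rintro g g' ⟨a, h⟩; exact ⟨φ a, h⟩)

lemma pi_mk (φ : A →* B) (β : B →* G) (g : G) :
    pi φ β (Quotient.mk (orb (β.comp φ)) g) = Quotient.mk (orb β) g := rfl

lemma pi_surjective (φ : A →* B) (β : B →* G) : Function.Surjective (pi φ β) := by
  intro c
  induction c using Quotient.ind with
  | _ g => exact ⟨Quotient.mk (orb (β.comp φ)) g, rfl⟩

lemma pi_bijective_iff (φ : A →* B) (β : B →* G) :
    Function.Bijective (pi φ β) ↔ (β.comp φ).range = β.range := by
  constructor
  · rintro ⟨hinj, -⟩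
    refine le_antisymm ?_ ?_
    · rintro x ⟨a, rfl⟩; exact ⟨φ a, rfl⟩
    · rintro x ⟨b, rfl⟩
      have h1 : pi φ β (Quotient.mk (orb (β.comp φ)) 1)
          = pi φ β (Quotient.mk (orb (β.comp φ)) (β b)) := by
        rw [pi_mk, pi_mk]
        exact Quotient.sound ⟨b, mul_one (β b)⟩
      obtain ⟨a, ha⟩ := Quotient.exact (hinj h1)
      exact ⟨a, by simpa using ha⟩
  · intro h
    constructor
    · intro c c' hc
      induction c using Quotient.ind with
      | _ g =>
      induction c' using Quotient.ind with
      | _ g' =>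
      rw [pi_mk, pi_mk] at hc
      obtain ⟨b, hb⟩ := Quotient.exact hc
      have : β b ∈ (β.comp φ).range := by rw [h]; exact ⟨b, rfl⟩
      obtain ⟨a, ha⟩ := this
      refine Quotient.sound ⟨a, ?_⟩
      rw [show (β.comp φ) a = β b from ha, hb]
    · exact pi_surjective φ β

lemma H0_square (φ : A →* B) (β : B →* G) (v : OS (β.comp φ) →₀ ℤ) :
    H0Map φ ((permRep G G).comp β) (Th0 (β.comp φ) v)
      = Th0 β (Finsupp.mapDomain.addMonoidHom (pi φ β) v) := by
  induction v using Finsupp.induction_linear with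
  | zero => simp
  | add p q hp hq => rw [map_add, map_add, map_add, hp, hq, ← map_add]
  | single c z =>
    rw [Th0_single]
    rw [show Finsupp.mapDomain.addMonoidHom (pi φ β) (Finsupp.single c z)
      = Finsupp.single (pi φ β c) z by
        rw [Finsupp.mapDomain.addMonoidHom_apply, Finsupp.mapDomain_single]]
    rw [Th0_single]
    have hc : pi φ β c = Quotient.mk (orb β) c.out := by
      conv_lhs => rw [← Quotient.out_eq c]
      rfl
    rw [hc]
    have : H0Map φ ((permRep G G).comp β)
        (QuotientAddGroup.mk' (d1 (rho (β.comp φ))).range (Finsupp.single c.out z))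
        = QuotientAddGroup.mk' (d1 (rho β)).range (Finsupp.single c.out z) := rfl
    rw [this]
    exact (mk_single_repg β c.out z).symm

lemma H0_cond (φ : A →* B) (β : B →* G) :
    Function.Bijective (H0Map φ ((permRep G G).comp β)) ↔ (β.comp φ).range = β.range := by
  rw [bij_conj (Th0_bijective (β.comp φ)) (Th0_bijective β) (H0_square φ β)]
  rw [← pi_bijective_iff φ β]
  constructor
  · intro h
    exact ⟨injective_of_mapDomain _ h, pi_surjective φ β⟩
  · intro h
    exact mapDomain_bijective _ h

end FVP

namespace FVP
open FV
variable {A B G : Type} [Group A] [Group B] [Group G]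

/-- The coefficient group for `H₁`. -/
abbrev Vab (α : A →* G) := OS α →₀ Additive (Abelianization ↥α.ker)

lemma ab_surj {H : Type} [Group H] (x : Additive (Abelianization H)) :
    ∃ h : H, Additive.ofMul (Abelianization.of h) = x := by
  obtain ⟨h, rfl⟩ := QuotientGroup.mk_surjective (Additive.toMul x)
  exact ⟨h, rfl⟩

/-- The basic `1`-cycle `k ⊗ g` for `k ∈ ker α`. -/
def zc (α : A →* G) (k : A) (hk : k ∈ α.ker) (g : G) : ↥(Z1 (rho α)) :=
  ⟨Finsupp.single k (Finsupp.single g 1), by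
    have : d1 (rho α) (Finsupp.single k (Finsupp.single g 1)) = 0 := by
      rw [d1_single, MonoidHom.mem_ker.mp hk]
      simp
    exact this⟩

lemma zc_coe (α : A →* G) (k : A) (hk : k ∈ α.ker) (g : G) :
    ((zc α k hk g : ↥(Z1 (rho α))) : A →₀ Mz G)
      = Finsupp.single k (Finsupp.single g 1) := rfl

/-- Conjugation move: `[k ⊗ g] = [(bkb⁻¹) ⊗ (α b · g)]` in `H₁`. -/
lemma zc_conj (α : A →* G) (b k : A) (hk : k ∈ α.ker) (hbk : b * k * b⁻¹ ∈ α.ker) (g : G) :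
    QuotientAddGroup.mk' ((d2 (rho α)).range.addSubgroupOf (Z1 (rho α))) (zc α k hk g)
      = QuotientAddGroup.mk' _ (zc α (b * k * b⁻¹) hbk (α b * g)) := by
  rw [QuotientAddGroup.mk'_eq_mk']
  refine ⟨⟨Finsupp.single (b * k * b⁻¹) (Finsupp.single (α b * g) 1)
      - Finsupp.single k (Finsupp.single g 1), ?_⟩, ?_, ?_⟩
  · have h1 : d1 (rho α) (Finsupp.single (b * k * b⁻¹) (Finsupp.single (α b * g) 1)) = 0 := by
      rw [d1_single, MonoidHom.mem_ker.mp hbk]; simp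
    have h2 : d1 (rho α) (Finsupp.single k (Finsupp.single g 1)) = 0 := by
      rw [d1_single, MonoidHom.mem_ker.mp hk]; simp
    have : d1 (rho α) (Finsupp.single (b * k * b⁻¹) (Finsupp.single (α b * g) 1)
        - Finsupp.single k (Finsupp.single g 1)) = 0 := by
      rw [map_sub, h1, h2, sub_zero]
    exact this
  · rw [AddSubgroup.mem_addSubgroupOf]
    have key : d2 (rho α) (Finsupp.single (b * k * b⁻¹, b) (Finsupp.single (α b * g) 1)
        - Finsupp.single (b, k) (Finsupp.single (α b * g) 1))
        = Finsupp.single (b * k * b⁻¹) (Finsupp.single (α b * g) 1)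
          - Finsupp.single k (Finsupp.single g 1) := by
      rw [map_sub, d2_single, d2_single]
      rw [show (α b)⁻¹ * (α b * g) = g by group]
      rw [MonoidHom.mem_ker.mp hbk, inv_one, one_mul]
      rw [show b * k * b⁻¹ * b = b * k by group]
      abel
    exact ⟨_, key⟩
  · apply Subtype.ext
    rw [AddSubgroup.coe_add, zc_coe, zc_coe]
    show _ + (Finsupp.single (b * k * b⁻¹) (Finsupp.single (α b * g) 1)
        - Finsupp.single k (Finsupp.single g 1)) = _
    abel

/-- `k ↦ [k ⊗ rep c]` as a monoid hom to `H₁`. -/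
def mu (α : A →* G) (c : OS α) : ↥α.ker →* Multiplicative (H1 (rho α)) where
  toFun k := Multiplicative.ofAdd
    (QuotientAddGroup.mk' ((d2 (rho α)).range.addSubgroupOf (Z1 (rho α))) (zc α k.1 k.2 c.out))
  map_one' := by
    have h0 : QuotientAddGroup.mk' ((d2 (rho α)).range.addSubgroupOf (Z1 (rho α)))
        (zc α (1 : A) (one_mem _) c.out) = 0 := by
      rw [QuotientAddGroup.mk'_apply, QuotientAddGroup.eq_zero_iff,
        AddSubgroup.mem_addSubgroupOf]
      refine ⟨Finsupp.single ((1 : A), (1 : A)) (Finsupp.single c.out 1), ?_⟩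
      rw [zc_coe, d2_single]
      simp
    exact congrArg Multiplicative.ofAdd h0
  map_mul' k₁ k₂ := by
    have hsum : QuotientAddGroup.mk' ((d2 (rho α)).range.addSubgroupOf (Z1 (rho α)))
        (zc α (k₁.1 * k₂.1) (mul_mem k₁.2 k₂.2) c.out)
        = QuotientAddGroup.mk' _ (zc α k₁.1 k₁.2 c.out)
          + QuotientAddGroup.mk' _ (zc α k₂.1 k₂.2 c.out) := by
      rw [← map_add, QuotientAddGroup.mk'_eq_mk']
      refine ⟨⟨Finsupp.single k₁.1 (Finsupp.single c.out 1)
          + Finsupp.single k₂.1 (Finsupp.single c.out 1)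
          - Finsupp.single (k₁.1 * k₂.1) (Finsupp.single c.out 1), ?_⟩, ?_, ?_⟩
      · have e1 : d1 (rho α) (Finsupp.single k₁.1 (Finsupp.single c.out 1)) = 0 := by
          rw [d1_single, MonoidHom.mem_ker.mp k₁.2]; simp
        have e2 : d1 (rho α) (Finsupp.single k₂.1 (Finsupp.single c.out 1)) = 0 := by
          rw [d1_single, MonoidHom.mem_ker.mp k₂.2]; simp
        have e3 : d1 (rho α) (Finsupp.single (k₁.1 * k₂.1) (Finsupp.single c.out 1)) = 0 := by
          rw [d1_single, MonoidHom.mem_ker.mp (mul_mem k₁.2 k₂.2)]; simp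
        have : d1 (rho α) (Finsupp.single k₁.1 (Finsupp.single c.out 1)
            + Finsupp.single k₂.1 (Finsupp.single c.out 1)
            - Finsupp.single (k₁.1 * k₂.1) (Finsupp.single c.out 1)) = 0 := by
          rw [map_sub, map_add, e1, e2, e3]; simp
        exact this
      · rw [AddSubgroup.mem_addSubgroupOf]
        have key : d2 (rho α) (Finsupp.single (k₁.1, k₂.1) (Finsupp.single c.out 1))
            = Finsupp.single k₁.1 (Finsupp.single c.out 1)
              + Finsupp.single k₂.1 (Finsupp.single c.out 1)
              - Finsupp.single (k₁.1 * k₂.1) (Finsupp.single c.out 1) := by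
          rw [d2_single, MonoidHom.mem_ker.mp k₁.2, inv_one, one_mul]
          abel
        exact ⟨_, key⟩
      · apply Subtype.ext
        rw [AddSubgroup.coe_add, AddSubgroup.coe_add, zc_coe, zc_coe, zc_coe]
        show _ + (Finsupp.single k₁.1 (Finsupp.single c.out 1)
            + Finsupp.single k₂.1 (Finsupp.single c.out 1)
            - Finsupp.single (k₁.1 * k₂.1) (Finsupp.single c.out 1)) = _
        abel
    exact congrArg Multiplicative.ofAdd hsum

/-- The map `⊕_c (ker α)ᵃᵇ → H₁`. -/
def Th1 (α : A →* G) : Vab α →+ H1 (rho α) :=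
  Finsupp.liftAddHom fun c => MonoidHom.toAdditiveLeft (Abelianization.lift (mu α c))

lemma Th1_single (α : A →* G) (c : OS α) (k : ↥α.ker) :
    Th1 α (Finsupp.single c (Additive.ofMul (Abelianization.of k)))
      = QuotientAddGroup.mk' ((d2 (rho α)).range.addSubgroupOf (Z1 (rho α)))
          (zc α k.1 k.2 c.out) := by
  simp only [Th1, Finsupp.liftAddHom_apply_single]
  rfl

/-- The chain-level retraction `C₁ → ⊕_c (ker α)ᵃᵇ`. -/
def rr (α : A →* G) : (A →₀ Mz G) →+ Vab α :=
  Finsupp.liftAddHom fun a => Finsupp.liftAddHom fun g =>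
    zmultiplesHom _ (Finsupp.single (Quotient.mk (orb α) g)
      (Additive.ofMul (Abelianization.of ⟨kp α a g, kp_ker α a g⟩)))

lemma rr_single (α : A →* G) (a : A) (g : G) (z : ℤ) :
    rr α (Finsupp.single a (Finsupp.single g z))
      = z • Finsupp.single (Quotient.mk (orb α) g)
          (Additive.ofMul (Abelianization.of ⟨kp α a g, kp_ker α a g⟩)) := by
  simp only [rr, Finsupp.liftAddHom_apply_single, zmultiplesHom_apply]

lemma rr_d2 (α : A →* G) : (rr α).comp (d2 (rho α)) = 0 := by
  refine C2_ext _ _ fun a₁ a₂ g z => ?_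
  simp only [AddMonoidHom.comp_apply, AddMonoidHom.zero_apply, d2_single, map_sub, map_add,
    rr_single]
  rw [show Quotient.mk (orb α) ((α a₁)⁻¹ * g) = Quotient.mk (orb α) g from
    Quotient.sound ⟨a₁, by group⟩]
  have h : Finsupp.single (Quotient.mk (orb α) g)
        (Additive.ofMul (Abelianization.of
          (⟨kp α a₂ ((α a₁)⁻¹ * g), kp_ker α a₂ ((α a₁)⁻¹ * g)⟩ : ↥α.ker)))
      + Finsupp.single (Quotient.mk (orb α) g)
        (Additive.ofMul (Abelianization.of (⟨kp α a₁ g, kp_ker α a₁ g⟩ : ↥α.ker)))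
      = Finsupp.single (Quotient.mk (orb α) g)
        (Additive.ofMul (Abelianization.of
          (⟨kp α (a₁ * a₂) g, kp_ker α (a₁ * a₂) g⟩ : ↥α.ker))) := by
    rw [← Finsupp.single_add]
    congr 1
    show Additive.ofMul (Abelianization.of _ * Abelianization.of _) = _
    rw [mul_comm, ← map_mul]
    have : (⟨kp α a₁ g, kp_ker α a₁ g⟩ : ↥α.ker)
        * ⟨kp α a₂ ((α a₁)⁻¹ * g), kp_ker α a₂ ((α a₁)⁻¹ * g)⟩
        = (⟨kp α (a₁ * a₂) g, kp_ker α (a₁ * a₂) g⟩ : ↥α.ker) := by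
      apply Subtype.ext
      show kp α a₁ g * kp α a₂ ((α a₁)⁻¹ * g) = kp α (a₁ * a₂) g
      exact kp_mul α a₁ a₂ g
    rw [this]
  rw [← h, smul_add]
  abel

/-- `rr` descends to homology. -/
def rh1 (α : A →* G) : H1 (rho α) →+ Vab α :=
  QuotientAddGroup.lift _ ((rr α).comp (Z1 (rho α)).subtype) (by
    intro x hx
    rw [AddSubgroup.mem_addSubgroupOf] at hx
    obtain ⟨y, hy⟩ := hx
    show rr α x.1 = 0
    rw [← hy]
    exact DFunLike.congr_fun (rr_d2 α) y)

lemma rh1_mk (α : A →* G) (x : ↥(Z1 (rho α))) :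
    rh1 α (QuotientAddGroup.mk' ((d2 (rho α)).range.addSubgroupOf (Z1 (rho α))) x)
      = rr α x.1 := rfl

lemma rh1_Th1 (α : A →* G) (v : Vab α) : rh1 α (Th1 α v) = v := by
  induction v using Finsupp.induction_linear with
  | zero => simp
  | add p q hp hq => rw [map_add, map_add, hp, hq]
  | single c x =>
    obtain ⟨k, rfl⟩ := ab_surj x
    rw [Th1_single, rh1_mk]
    show rr α (Finsupp.single k.1 (Finsupp.single c.out 1)) = _
    rw [rr_single, one_smul, Quotient.out_eq]
    congr 2
    exact congrArg Abelianization.of (Subtype.ext (kp_of_ker α k.1 k.2 c))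

/-- `theta` corestricted to cycles. -/
def thetaZ (α : A →* G) : (A →₀ Mz G) →+ ↥(Z1 (rho α)) :=
  (theta α).codRestrict _ (fun x => by
    show d1 (rho α) (theta α x) = 0
    exact DFunLike.congr_fun (d1_theta α) x)

lemma Th1_rr (α : A →* G) :
    (Th1 α).comp (rr α)
      = (QuotientAddGroup.mk' ((d2 (rho α)).range.addSubgroupOf (Z1 (rho α)))).comp
          (thetaZ α) := by
  refine C1_ext _ _ fun a g z => ?_
  simp only [AddMonoidHom.comp_apply, rr_single, map_zsmul, Th1_single]
  have : thetaZ α (Finsupp.single a (Finsupp.single g z))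
      = z • zc α (kp α a g) (kp_ker α a g) (Quotient.mk (orb α) g).out := by
    apply Subtype.ext
    show theta α _ = _
    rw [theta_single]
    show _ = z • Finsupp.single (kp α a g) (Finsupp.single (repg α g) 1)
    rw [Finsupp.smul_single, Finsupp.smul_single, smul_eq_mul, mul_one]
  rw [this, map_zsmul]

lemma Th1_bijective (α : A →* G) : Function.Bijective (Th1 α) := by
  constructor
  · intro x y h
    rw [← rh1_Th1 α x, ← rh1_Th1 α y, h]
  · intro q
    obtain ⟨x, rfl⟩ := QuotientAddGroup.mk'_surjective
      ((d2 (rho α)).range.addSubgroupOf (Z1 (rho α))) q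
    refine ⟨rr α x.1, ?_⟩
    have h1 : Th1 α (rr α x.1) = QuotientAddGroup.mk' _ (thetaZ α x.1) :=
      DFunLike.congr_fun (Th1_rr α) x.1
    rw [h1, QuotientAddGroup.mk'_eq_mk']
    refine ⟨⟨x.1 - theta α x.1, ?_⟩, ?_, ?_⟩
    · have hx : d1 (rho α) x.1 = 0 := x.2
      have h2 := DFunLike.congr_fun (d1_theta α) x.1
      simp only [AddMonoidHom.comp_apply, AddMonoidHom.zero_apply] at h2
      have : d1 (rho α) (x.1 - theta α x.1) = 0 := by
        rw [map_sub, hx, h2, sub_zero]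
      exact this
    · rw [AddSubgroup.mem_addSubgroupOf]
      refine ⟨hh α x.1, ?_⟩
      have hm := DFunLike.congr_fun (master α) x.1
      simp only [AddMonoidHom.add_apply, AddMonoidHom.comp_apply, AddMonoidHom.id_apply] at hm
      have hx : d1 (rho α) x.1 = 0 := x.2
      rw [hx, map_zero, add_zero] at hm
      rw [← sub_eq_iff_eq_add'] at hm
      · exact hm.symm
    · apply Subtype.ext
      show theta α x.1 + (x.1 - theta α x.1) = x.1
      abel

end FVP

namespace FVP
open FV
variable {A B G : Type} [Group A] [Group B] [Group G]

/-- Restriction of `φ` to kernels. -/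
def phiK (φ : A →* B) (β : B →* G) : ↥(β.comp φ).ker →* ↥β.ker :=
  (φ.comp (β.comp φ).ker.subtype).codRestrict β.ker (fun k => by
    have : (β.comp φ) k.1 = 1 := k.2
    exact MonoidHom.mem_ker.mpr this)

/-- The induced map on abelianized kernels. -/
def phiAb (φ : A →* B) (β : B →* G) :
    Abelianization ↥(β.comp φ).ker →* Abelianization ↥β.ker :=
  Abelianization.map (phiK φ β)

/-- Conjugation by `b` on the kernel of `β`. -/
def cK (β : B →* G) (b : B) : ↥β.ker →* ↥β.ker :=
  ((MulAut.conj b).toMonoidHom.comp β.ker.subtype).codRestrict β.ker (fun k => by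
    have : β (b * k.1 * b⁻¹) = 1 := by
      rw [map_mul, map_mul, MonoidHom.mem_ker.mp k.2, map_inv]
      group
    exact MonoidHom.mem_ker.mpr this)

lemma cK_apply (β : B →* G) (b : B) (k : ↥β.ker) : (cK β b k).1 = b * k.1 * b⁻¹ := rfl

/-- Conjugation by `b` on the abelianized kernel. -/
def cj (β : B →* G) (b : B) : Abelianization ↥β.ker →* Abelianization ↥β.ker :=
  Abelianization.map (cK β b)

lemma cj_cj_inv (β : B →* G) (b : B) (x : Abelianization ↥β.ker) :
    cj β b (cj β b⁻¹ x) = x := by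
  obtain ⟨k, rfl⟩ := QuotientGroup.mk_surjective x
  show cj β b (cj β b⁻¹ (Abelianization.of k)) = Abelianization.of k
  rw [cj, cj, Abelianization.map_of, Abelianization.map_of]
  refine congrArg Abelianization.of (Subtype.ext ?_)
  rw [cK_apply, cK_apply]
  group

lemma cj_inv_cj (β : B →* G) (b : B) (x : Abelianization ↥β.ker) :
    cj β b⁻¹ (cj β b x) = x := by
  have := cj_cj_inv β b⁻¹ x
  rwa [inv_inv] at this

/-- The block-diagonal comparison map `⊕_c (ker α)ᵃᵇ → ⊕_{c'} (ker β)ᵃᵇ`. -/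
def psi (φ : A →* B) (β : B →* G) : Vab (β.comp φ) →+ Vab β :=
  Finsupp.liftAddHom fun c => (Finsupp.singleAddHom (pi φ β c)).comp
    (MonoidHom.toAdditive ((cj β (tf β c.out)).comp (phiAb φ β)))

lemma psi_single (φ : A →* B) (β : B →* G) (c : OS (β.comp φ))
    (x : Abelianization ↥(β.comp φ).ker) :
    psi φ β (Finsupp.single c (Additive.ofMul x))
      = Finsupp.single (pi φ β c)
          (Additive.ofMul (cj β (tf β c.out) (phiAb φ β x))) := by
  simp only [psi, Finsupp.liftAddHom_apply_single]
  rfl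

lemma pi_out (φ : A →* B) (β : B →* G) (c : OS (β.comp φ)) :
    (pi φ β c).out = repg β c.out := by
  conv_lhs => rw [← Quotient.out_eq c]
  rfl

lemma H1_square (φ : A →* B) (β : B →* G) (v : Vab (β.comp φ)) :
    H1Map φ ((permRep G G).comp β) (Th1 (β.comp φ) v) = Th1 β (psi φ β v) := by
  induction v using Finsupp.induction_linear with
  | zero => simp
  | add p q hp hq => rw [map_add, map_add, map_add, hp, hq, ← map_add]
  | single c x =>
    obtain ⟨k, rfl⟩ := ab_surj x
    rw [Th1_single, psi_single]
    rw [show cj β (tf β c.out) (phiAb φ β (Abelianization.of k))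
      = Abelianization.of (cK β (tf β c.out) (phiK φ β k)) by
        rw [phiAb, Abelianization.map_of, cj, Abelianization.map_of]]
    rw [Th1_single]
    have hker : φ k.1 ∈ β.ker := (phiK φ β k).2
    have lhs_eq : H1Map φ ((permRep G G).comp β)
        (QuotientAddGroup.mk' ((d2 (rho (β.comp φ))).range.addSubgroupOf
          (Z1 (rho (β.comp φ)))) (zc (β.comp φ) k.1 k.2 c.out))
        = QuotientAddGroup.mk' ((d2 (rho β)).range.addSubgroupOf (Z1 (rho β)))
            (zc β (φ k.1) hker c.out) := by
      have hz : Z1Map φ ((permRep G G).comp β) (zc (β.comp φ) k.1 k.2 c.out)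
          = zc β (φ k.1) hker c.out := by
        apply Subtype.ext
        show Finsupp.mapDomain.addMonoidHom φ (Finsupp.single k.1 (Finsupp.single c.out 1)) = _
        rw [Finsupp.mapDomain.addMonoidHom_apply, Finsupp.mapDomain_single]
        rfl
      show QuotientAddGroup.mk' _ (Z1Map φ ((permRep G G).comp β)
        (zc (β.comp φ) k.1 k.2 c.out)) = _
      rw [hz]
    rw [lhs_eq]
    have hbk : tf β c.out * φ k.1 * (tf β c.out)⁻¹ ∈ β.ker := (cK β (tf β c.out) (phiK φ β k)).2
    have step := zc_conj β (tf β c.out) (φ k.1) hker hbk c.out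
    rw [step]
    have harg : β (tf β c.out) * c.out = (pi φ β c).out := by
      rw [tf_spec β c.out, pi_out]
    rw [harg]
    rfl

end FVP

namespace FVP
open FV
variable {A B G : Type} [Group A] [Group B] [Group G]

/-- The reindexing-and-conjugating isomorphism part of `psi`. -/
def Om (φ : A →* B) (β : B →* G) :
    (OS (β.comp φ) →₀ Additive (Abelianization ↥β.ker)) →+ Vab β :=
  Finsupp.liftAddHom fun c => (Finsupp.singleAddHom (pi φ β c)).comp
    (MonoidHom.toAdditive (cj β (tf β c.out)))

lemma Om_single (φ : A →* B) (β : B →* G) (c : OS (β.comp φ))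
    (x : Abelianization ↥β.ker) :
    Om φ β (Finsupp.single c (Additive.ofMul x))
      = Finsupp.single (pi φ β c) (Additive.ofMul (cj β (tf β c.out) x)) := by
  simp only [Om, Finsupp.liftAddHom_apply_single]
  rfl

/-- `psi` factors as `Om ∘ mapRange (phiAb)`. -/
lemma psi_eq (φ : A →* B) (β : B →* G) (v : Vab (β.comp φ)) :
    psi φ β v = Om φ β
      (Finsupp.mapRange.addMonoidHom (MonoidHom.toAdditive (phiAb φ β)) v) := by
  induction v using Finsupp.induction_linear with
  | zero => simp
  | add p q hp hq => rw [map_add, map_add, map_add, hp, hq]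
  | single c x =>
    obtain ⟨k, rfl⟩ := ab_surj x
    rw [psi_single, Finsupp.mapRange.addMonoidHom_apply, Finsupp.mapRange_single]
    rw [show MonoidHom.toAdditive (phiAb φ β) (Additive.ofMul (Abelianization.of k))
      = Additive.ofMul (phiAb φ β (Abelianization.of k)) from rfl]
    rw [Om_single]

lemma Om_bijective (φ : A →* B) (β : B →* G) (hpi : Function.Bijective (pi φ β)) :
    Function.Bijective (Om φ β) := by
  let e := Equiv.ofBijective _ hpi
  let Om' : Vab β →+ (OS (β.comp φ) →₀ Additive (Abelianization ↥β.ker)) :=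
    Finsupp.liftAddHom fun c' => (Finsupp.singleAddHom (e.symm c')).comp
      (MonoidHom.toAdditive (cj β ((tf β ((e.symm c').out))⁻¹)))
  have hOm' : ∀ (c' : OS β) (y : Abelianization ↥β.ker),
      Om' (Finsupp.single c' (Additive.ofMul y))
        = Finsupp.single (e.symm c')
            (Additive.ofMul (cj β ((tf β ((e.symm c').out))⁻¹) y)) := by
    intro c' y
    simp only [Om', Finsupp.liftAddHom_apply_single]
    rfl
  have h1 : ∀ v, Om' (Om φ β v) = v := by
    intro v
    induction v using Finsupp.induction_linear with
    | zero => simp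
    | add p q hp hq => rw [map_add, map_add, hp, hq]
    | single c x =>
      obtain ⟨k, rfl⟩ := ab_surj x
      rw [Om_single, hOm']
      have hc : e.symm (pi φ β c) = c := by
        rw [show pi φ β c = e c from rfl, Equiv.symm_apply_apply]
      rw [hc, cj_inv_cj]
  have h2 : ∀ w, Om φ β (Om' w) = w := by
    intro w
    induction w using Finsupp.induction_linear with
    | zero => simp
    | add p q hp hq => rw [map_add, map_add, hp, hq]
    | single c' x =>
      obtain ⟨k, rfl⟩ := ab_surj x
      rw [hOm', Om_single]
      have hc : pi φ β (e.symm c') = c' := by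
        rw [show pi φ β (e.symm c') = e (e.symm c') from rfl, Equiv.apply_symm_apply]
      rw [hc, cj_cj_inv]
  exact Function.bijective_iff_has_inverse.mpr ⟨Om', h1, h2⟩

lemma mapRange_bij_iff {S V W : Type} [Nonempty S] [AddCommGroup V] [AddCommGroup W]
    (f : V →+ W) :
    Function.Bijective (Finsupp.mapRange.addMonoidHom (ι := S) f)
      ↔ Function.Bijective f := by
  constructor
  · intro h
    have c₀ : S := Classical.arbitrary S
    constructor
    · intro v w hvw
      have h2 : Finsupp.mapRange.addMonoidHom (ι := S) f (Finsupp.single c₀ v)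
          = Finsupp.mapRange.addMonoidHom (ι := S) f (Finsupp.single c₀ w) := by
        rw [Finsupp.mapRange.addMonoidHom_apply, Finsupp.mapRange.addMonoidHom_apply,
          Finsupp.mapRange_single, Finsupp.mapRange_single, hvw]
      have := h.1 h2
      exact Finsupp.single_injective c₀ this
    · intro w
      obtain ⟨x, hx⟩ := h.2 (Finsupp.single c₀ w)
      refine ⟨x c₀, ?_⟩
      have : (Finsupp.mapRange.addMonoidHom (ι := S) f x) c₀ = Finsupp.single c₀ w c₀ := by
        rw [hx]
      rw [Finsupp.mapRange.addMonoidHom_apply, Finsupp.mapRange_apply,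
        Finsupp.single_eq_same] at this
      exact this
  · intro hf
    have : ⇑(Finsupp.mapRange.addMonoidHom (ι := S) f)
        = ⇑(Finsupp.mapRange.addEquiv (ι := S) (AddEquiv.ofBijective f hf)) := by
      funext x
      rfl
    rw [this]
    exact (Finsupp.mapRange.addEquiv (ι := S) (AddEquiv.ofBijective f hf)).bijective

lemma psi_bij_iff (φ : A →* B) (β : B →* G) (hpi : Function.Bijective (pi φ β)) :
    Function.Bijective (psi φ β) ↔ Function.Bijective (phiAb φ β) := by
  haveI : Nonempty (OS (β.comp φ)) := ⟨Quotient.mk (orb (β.comp φ)) 1⟩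
  have hfun : ⇑(psi φ β) = ⇑(Om φ β)
      ∘ ⇑(Finsupp.mapRange.addMonoidHom (MonoidHom.toAdditive (phiAb φ β))) :=
    funext (psi_eq φ β)
  rw [hfun]
  rw [Function.Bijective.of_comp_iff' (Om_bijective φ β hpi)]
  rw [mapRange_bij_iff]
  exact bij_conj (Equiv.bijective Additive.ofMul) (Equiv.bijective Additive.ofMul)
    (fun x => rfl)

end FVP

namespace FVP
open FV
variable {A B G : Type} [Group A] [Group B] [Group G]

lemma comm_eq {H : Type} [Group H] (K : Subgroup H) :
    ⁅K, K⁆ = Subgroup.map K.subtype (commutator ↥K) := by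
  rw [commutator, Subgroup.map_commutator, ← MonoidHom.range_eq_map, Subgroup.range_subtype]

lemma mem_comm_iff {H : Type} [Group H] {K : Subgroup H} (k : ↥K) :
    k.1 ∈ ⁅K, K⁆ ↔ k ∈ commutator ↥K := by
  rw [comm_eq]
  constructor
  · rintro ⟨y, hy, hyv⟩
    rwa [show y = k from Subtype.ext hyv] at hy
  · intro h
    exact ⟨k, h, rfl⟩

lemma of_eq_one_iff {H : Type} [Group H] {K : Subgroup H} (k : ↥K) :
    Abelianization.of k = 1 ↔ k.1 ∈ ⁅K, K⁆ := by
  rw [mem_comm_iff]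
  exact QuotientGroup.eq_one_iff k

lemma ab_of {H : Type} [Group H] (h : H) :
    (QuotientGroup.mk h : Abelianization H) = Abelianization.of h := rfl

lemma of_eq_iff {H : Type} [Group H] {K : Subgroup H} (k k' : ↥K) :
    Abelianization.of k = Abelianization.of k' ↔ (k⁻¹ * k').1 ∈ ⁅K, K⁆ := by
  rw [mem_comm_iff]
  exact QuotientGroup.eq

/-- The five-lemma style equivalence between bijectivity on abelianized kernels and on
the quotients by the commutator subgroups of the kernels. -/
lemma five (φ : A →* B) (β : B →* G) (hr : (β.comp φ).range = β.range) :
    Function.Bijective (phiAb φ β) ↔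
      Function.Bijective
        (QuotientGroup.map ⁅(β.comp φ).ker, (β.comp φ).ker⁆ ⁅β.ker, β.ker⁆ φ
          (ker_comp_commutator_le φ β)) := by
  set Qm := QuotientGroup.map ⁅(β.comp φ).ker, (β.comp φ).ker⁆ ⁅β.ker, β.ker⁆ φ
    (ker_comp_commutator_le φ β) with hQm
  have hCBle : ⁅β.ker, β.ker⁆ ≤ β.ker := Subgroup.commutator_le_left _ _
  have hCAle : ⁅(β.comp φ).ker, (β.comp φ).ker⁆ ≤ (β.comp φ).ker :=
    Subgroup.commutator_le_left _ _
  constructor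
  · intro hab
    constructor
    · rw [injective_iff_map_eq_one]
      intro x hx
      obtain ⟨a, rfl⟩ := QuotientGroup.mk_surjective x
      rw [hQm, QuotientGroup.map_mk, QuotientGroup.eq_one_iff] at hx
      have haK : a ∈ (β.comp φ).ker := by
        have : φ a ∈ β.ker := hCBle hx
        exact MonoidHom.mem_ker.mpr (MonoidHom.mem_ker.mp this)
      set k : ↥(β.comp φ).ker := ⟨a, haK⟩
      have h1 : phiAb φ β (Abelianization.of k) = 1 := by
        rw [phiAb, Abelianization.map_of]
        rw [of_eq_one_iff]
        exact hx
      have h2 : Abelianization.of k = 1 :=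
        (injective_iff_map_eq_one (phiAb φ β)).mp hab.1 _ h1
      rw [of_eq_one_iff] at h2
      rw [QuotientGroup.eq_one_iff]
      exact h2
    · intro y
      obtain ⟨b, rfl⟩ := QuotientGroup.mk_surjective y
      have : β b ∈ (β.comp φ).range := by rw [hr]; exact ⟨b, rfl⟩
      obtain ⟨a, ha⟩ := this
      have hk' : (φ a)⁻¹ * b ∈ β.ker := by
        rw [MonoidHom.mem_ker, map_mul, map_inv]
        rw [show β (φ a) = (β.comp φ) a from rfl, ha]
        group
      obtain ⟨x, hx⟩ := hab.2 (Abelianization.of ⟨(φ a)⁻¹ * b, hk'⟩)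
      obtain ⟨k, rfl⟩ := QuotientGroup.mk_surjective x
      rw [ab_of, phiAb, Abelianization.map_of, of_eq_iff] at hx
      refine ⟨QuotientGroup.mk (a * k.1), ?_⟩
      rw [hQm, QuotientGroup.map_mk, QuotientGroup.eq]
      have : ((phiK φ β k)⁻¹ * ⟨(φ a)⁻¹ * b, hk'⟩ : ↥β.ker).1
          = (φ (a * k.1))⁻¹ * b := by
        show (φ k.1)⁻¹ * ((φ a)⁻¹ * b) = _
        rw [map_mul]
        group
      rwa [this] at hx
  · intro hq
    constructor
    · rw [injective_iff_map_eq_one]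
      intro x hx
      obtain ⟨k, rfl⟩ := QuotientGroup.mk_surjective x
      rw [show (QuotientGroup.mk k : Abelianization ↥(β.comp φ).ker)
        = Abelianization.of k from rfl] at hx ⊢
      rw [phiAb, Abelianization.map_of, of_eq_one_iff] at hx
      have h1 : Qm (QuotientGroup.mk k.1) = 1 := by
        rw [hQm, QuotientGroup.map_mk, QuotientGroup.eq_one_iff]
        exact hx
      have h2 : (QuotientGroup.mk k.1 : A ⧸ ⁅(β.comp φ).ker, (β.comp φ).ker⁆) = 1 :=
        (injective_iff_map_eq_one Qm).mp hq.1 _ h1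
      rw [QuotientGroup.eq_one_iff] at h2
      rw [of_eq_one_iff]
      exact h2
    · intro y
      obtain ⟨k', rfl⟩ := QuotientGroup.mk_surjective y
      obtain ⟨x, hx⟩ := hq.2 (QuotientGroup.mk k'.1)
      obtain ⟨a, rfl⟩ := QuotientGroup.mk_surjective x
      rw [hQm, QuotientGroup.map_mk, QuotientGroup.eq] at hx
      have haK : a ∈ (β.comp φ).ker := by
        have h3 : (φ a)⁻¹ * k'.1 ∈ β.ker := hCBle hx
        have h4 : β ((φ a)⁻¹ * k'.1) = 1 := h3
        rw [map_mul, map_inv, MonoidHom.mem_ker.mp k'.2, mul_one, inv_eq_one] at h4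
        exact MonoidHom.mem_ker.mpr h4
      refine ⟨Abelianization.of ⟨a, haK⟩, ?_⟩
      rw [phiAb, Abelianization.map_of]
      show Abelianization.of (phiK φ β ⟨a, haK⟩) = Abelianization.of k'
      rw [of_eq_iff]
      exact hx
  
end FVP








/-- For a monomorphism `φ : A → B` of finitely generated groups and
`β : B → G` with `G` finite, the induced maps `φ⁎ : H_j(A; ℤ[G]) → H_j(B; ℤ[G])` are
bijective for `j = 0, 1` iff `im (β ∘ φ) = im β` and `φ` induces an isomorphism
`A/[ker (β∘φ), ker (β∘φ)] → B/[ker β, ker β]`. -/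
theorem stmt4 (A B G : Type) [Group A] [Group.FG A] [Group B] [Group.FG B]
    [Group G] [Finite G]
    (φ : A →* B) (hφ : Function.Injective φ) (β : B →* G) :
    (Function.Bijective (H0Map φ ((permRep G G).comp β)) ∧
      Function.Bijective (H1Map φ ((permRep G G).comp β))) ↔
    ((β.comp φ).range = β.range ∧
      Function.Bijective
        (QuotientGroup.map ⁅(β.comp φ).ker, (β.comp φ).ker⁆ ⁅β.ker, β.ker⁆ φ
          (ker_comp_commutator_le φ β))) := by
  constructor
  · rintro ⟨h0, h1⟩
    have hr : (β.comp φ).range = β.range := (FVP.H0_cond φ β).mp h0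
    refine ⟨hr, ?_⟩
    have hpi : Function.Bijective (FVP.pi φ β) := (FVP.pi_bijective_iff φ β).mpr hr
    have hpsi : Function.Bijective (FVP.psi φ β) :=
      (FVP.bij_conj (FVP.Th1_bijective (β.comp φ)) (FVP.Th1_bijective β)
        (FVP.H1_square φ β)).mp h1
    exact (FVP.five φ β hr).mp ((FVP.psi_bij_iff φ β hpi).mp hpsi)
  · rintro ⟨hr, hq⟩
    have h0 := (FVP.H0_cond φ β).mpr hr
    have hpi := (FVP.pi_bijective_iff φ β).mpr hr
    have hab := (FVP.five φ β hr).mpr hq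
    have hpsi := (FVP.psi_bij_iff φ β hpi).mpr hab
    have h1 := (FVP.bij_conj (FVP.Th1_bijective (β.comp φ)) (FVP.Th1_bijective β)
      (FVP.H1_square φ β)).mpr hpsi
    exact ⟨h0, h1⟩
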